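/- Let v₁,...,vₙ ∈ [0,1] and thresholds π₁,...,πₙ ∈ ℝ, and define the welfare of the policy as v_j where j is the smallest index with v_j ≥ π_j (and 0 if no such index exists). Fix a partition of {1,...,n} into k consecutive intervals I₁,...,I_k, and consider policies constant on each interval, parameterized by ρ = (ρ₁,...,ρ_k) ∈ ℝ^k. Then for any z > 0, there exist l₁,u₁,...,l_k,u_k ∈ ℝ ∪ {±∞} such that {ρ ∈ ℝ^k : welfare(ρ, v) ≥ z} = ⋃_{j=1}^k (u₁,∞) × ··· × (u_{j-1},∞) × (l_j, u_j] × ℝ^{k-j}. -/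
import Mathlib


open scoped Classical

/-- The index of the first buyer `i` (in order) whose value `v i` meets the posted price `π i`. -/
noncomputable def firstWinner {n : ℕ} (v π : Fin n → ℝ) : Option (Fin n) :=
  (List.finRange n).find? (fun i => decide (π i ≤ v i))

/-- The welfare of the posted-pricing policy `π` on values `v`: the value of the first buyer
who accepts, or `0` if no buyer accepts. -/
noncomputable def welfare {n : ℕ} (v π : Fin n → ℝ) : ℝ :=
  match firstWinner v π with
  | some i => v i
  | none => 0

lemma welfare_none {n : ℕ} {v π : Fin n → ℝ} (h : firstWinner v π = none) :
    welfare v π = 0 := by unfold welfare; rw [h]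

lemma welfare_some {n : ℕ} {v π : Fin n → ℝ} {i : Fin n} (h : firstWinner v π = some i) :
    welfare v π = v i := by unfold welfare; rw [h]

lemma firstWinner_eq_some_iff {n : ℕ} {v π : Fin n → ℝ} {i : Fin n} :
    firstWinner v π = some i ↔ π i ≤ v i ∧ ∀ j, j < i → ¬ π j ≤ v j := by
  unfold firstWinner
  rw [List.find?_eq_some_iff_getElem]
  simp only [decide_eq_true_eq, Bool.not_eq_true', decide_eq_false_iff_not,
    List.getElem_finRange, List.length_finRange, Fin.cast_mk]
  constructor
  · rintro ⟨h1, idx, hidx, heq, hall⟩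
    refine ⟨h1, fun j hj => ?_⟩
    have hval : idx = (i : ℕ) := by
      have := congrArg Fin.val heq; simpa using this
    have hji : (j : ℕ) < idx := by omega
    have := hall (j : ℕ) hji
    simpa using this
  · rintro ⟨h1, h2⟩
    refine ⟨h1, (i : ℕ), i.isLt, by simp, fun j hj => ?_⟩
    exact h2 ⟨j, lt_trans hj i.isLt⟩ hj

lemma firstWinner_exists {n : ℕ} {v π : Fin n → ℝ} (h : ∃ i, π i ≤ v i) :
    ∃ w, firstWinner v π = some w := by
  rw [← Option.isSome_iff_exists]
  unfold firstWinner
  rw [List.find?_isSome]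
  obtain ⟨i, hi⟩ := h
  exact ⟨i, List.mem_finRange i, by simpa using hi⟩
theorem stmt_11 (n k : ℕ) (v : Fin n → ℝ) (hv : ∀ i, v i ∈ Set.Icc (0 : ℝ) 1)
    (blk : Fin n → Fin k) (hmono : Monotone blk) (hsurj : Function.Surjective blk)
    (z : ℝ) (hz : 0 < z) :
    ∃ l u : Fin k → EReal,
      {ρ : Fin k → ℝ | z ≤ welfare v (fun i => ρ (blk i))} =
        ⋃ j : Fin k, {ρ : Fin k → ℝ |
          (∀ i : Fin k, i < j → u i < (ρ i : EReal)) ∧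
          l j < (ρ j : EReal) ∧ (ρ j : EReal) ≤ u j} := by
  classical
  set B : Fin k → Finset (Fin n) := fun j => Finset.univ.filter (fun i => blk i = j) with hB
  have hBmem : ∀ (i : Fin n) (j : Fin k), i ∈ B j ↔ blk i = j := by
    intro i j; simp [hB]
  have hBne : ∀ j, (B j).Nonempty := by
    intro j; obtain ⟨i, hi⟩ := hsurj j; exact ⟨i, (hBmem i j).2 hi⟩
  set u : Fin k → EReal := fun j => (((B j).sup' (hBne j) v : ℝ) : EReal) with hu
  set S : Fin k → Finset (Fin n) := fun j => (B j).filter (fun i => z ≤ v i) with hS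
  set l : Fin k → EReal := fun j =>
    if hSj : (S j).Nonempty then
      (if hP : ((B j).filter (fun i => i < (S j).min' hSj)).Nonempty then
        ((((B j).filter (fun i => i < (S j).min' hSj)).sup' hP v : ℝ) : EReal) else ⊥)
    else u j with hl
  refine ⟨l, u, ?_⟩
  ext ρ
  simp only [Set.mem_setOf_eq, Set.mem_iUnion]
  constructor
  · intro hw
    rcases hfw : firstWinner v (fun i => ρ (blk i)) with _ | i
    · rw [welfare_none hfw] at hw; linarith
    · rw [welfare_some hfw] at hw
      obtain ⟨hacc, hrej⟩ := firstWinner_eq_some_iff.1 hfw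
      refine ⟨blk i, ?_, ?_, ?_⟩
      · intro b hb
        have hsup : (B b).sup' (hBne b) v < ρ b := by
          rw [Finset.sup'_lt_iff]
          intro i' hi'
          have hbi' : blk i' = b := (hBmem i' b).1 hi'
          have hlt : i' < i := by
            by_contra hle
            push_neg at hle
            have := hmono hle
            rw [hbi'] at this
            exact absurd hb (not_lt.2 this)
          have h2 := hrej i' hlt
          push_neg at h2
          rwa [hbi'] at h2
        simp only [hu]
        exact_mod_cast hsup
      · have hSj : (S (blk i)).Nonempty :=
          ⟨i, Finset.mem_filter.2 ⟨(hBmem i (blk i)).2 rfl, by simpa using hw⟩⟩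
        simp only [hl]
        rw [dif_pos hSj]
        by_cases hP : ((B (blk i)).filter (fun i' => i' < (S (blk i)).min' hSj)).Nonempty
        · rw [dif_pos hP]
          have hsup : ((B (blk i)).filter (fun i' => i' < (S (blk i)).min' hSj)).sup' hP v
              < ρ (blk i) := by
            rw [Finset.sup'_lt_iff]
            intro i' hi'
            obtain ⟨hi'B, hi'lt⟩ := Finset.mem_filter.1 hi'
            have hmin : (S (blk i)).min' hSj ≤ i := Finset.min'_le _ _
              (Finset.mem_filter.2 ⟨(hBmem i (blk i)).2 rfl, by simpa using hw⟩)
            have hlt : i' < i := lt_of_lt_of_le hi'lt hmin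
            have h2 := hrej i' hlt
            push_neg at h2
            rwa [(hBmem i' (blk i)).1 hi'B] at h2
          exact_mod_cast hsup
        · rw [dif_neg hP]; exact EReal.bot_lt_coe _
      · have h2 : v i ≤ (B (blk i)).sup' (hBne (blk i)) v :=
          Finset.le_sup' v ((hBmem i (blk i)).2 rfl)
        simp only [hu]
        exact_mod_cast le_trans hacc h2
  · rintro ⟨j, hbefore, hlj, huj⟩
    have hSj : (S j).Nonempty := by
      by_contra hSj
      simp only [hl] at hlj
      rw [dif_neg hSj] at hlj
      exact absurd huj (not_le.2 hlj)
    have hi₀S : (S j).min' hSj ∈ S j := Finset.min'_mem _ _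
    have hi₀B : (S j).min' hSj ∈ B j := (Finset.mem_filter.1 hi₀S).1
    have hzi₀ : z ≤ v ((S j).min' hSj) := by simpa using (Finset.mem_filter.1 hi₀S).2
    obtain ⟨m, hmB, hm⟩ := Finset.exists_mem_eq_sup' (hBne j) v
    have hblkm : blk m = j := (hBmem m j).1 hmB
    have hρj_le : ρ j ≤ v m := by
      simp only [hu] at huj; rw [hm] at huj
      exact_mod_cast huj
    obtain ⟨w, hw⟩ := firstWinner_exists (v := v) (π := fun i => ρ (blk i))
      ⟨m, by show ρ (blk m) ≤ v m; rw [hblkm]; exact hρj_le⟩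
    obtain ⟨hacc, hrej⟩ := firstWinner_eq_some_iff.1 hw
    rw [welfare_some hw]
    have hblkw : blk w = j := by
      rcases lt_trichotomy (blk w) j with h1 | h1 | h1
      · exfalso
        have h2 := hbefore (blk w) h1
        have h3 : v w ≤ (B (blk w)).sup' (hBne _) v := Finset.le_sup' v ((hBmem w _).2 rfl)
        simp only [hu] at h2
        have h4 : ((B (blk w)).sup' (hBne _) v : ℝ) < ρ (blk w) := by exact_mod_cast h2
        linarith
      · exact h1
      · exfalso
        have hmw : m < w := by
          by_contra hc
          push_neg at hc
          have := hmono hc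
          rw [hblkm] at this
          exact absurd h1 (not_lt.2 this)
        exact hrej m hmw (by rw [hblkm]; exact hρj_le)
    rcases lt_trichotomy w ((S j).min' hSj) with h1 | h1 | h1
    · exfalso
      have hwP : w ∈ (B j).filter (fun i => i < (S j).min' hSj) :=
        Finset.mem_filter.2 ⟨(hBmem w j).2 hblkw, h1⟩
      simp only [hl] at hlj
      rw [dif_pos hSj, dif_pos ⟨w, hwP⟩] at hlj
      have h2 : v w ≤ ((B j).filter (fun i => i < (S j).min' hSj)).sup' ⟨w, hwP⟩ v :=
        Finset.le_sup' v hwP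
      have h3 : (((B j).filter (fun i => i < (S j).min' hSj)).sup' ⟨w, hwP⟩ v : ℝ) < ρ j := by
        exact_mod_cast hlj
      have h4 : ρ j ≤ v w := by rw [← hblkw]; exact hacc
      linarith
    · rw [h1]; exact hzi₀
    · have h2 := hrej ((S j).min' hSj) h1
      rw [(hBmem _ j).1 hi₀B] at h2
      push_neg at h2
      have h3 : ρ j ≤ v w := by rw [← hblkw]; exact hacc
      linarith
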